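/- Let α ∈ (0,1) and let S be a vertex set with S_B ⊆ S, with vertex boundary ∂S, exterior Ext(S) = V ∖ (S ∪ ∂S), and d_min∂S = min_{j∈∂S} d_j. Suppose that for all i ∈ Ext(S): |N({i}) ∩ ∂S| / d_i ≤ (αρ/(2(1−α)))² · d_i · d_min∂S. Let y ∈ ℝ^n satisfy supp(y) ⊆ S ∪ ∂S and ‖y‖₂ ≤ √20 + 1. Then for every i ∈ Ext(S), the forward-gradient map u(y) = y − ∇f(y) satisfies |u(y)_i| ≤ 2αρ√d_i, and consequently prox_{g_B}(u(y))_i = 0. -/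

import Mathlib

open Finset

noncomputable section

/-- Degree of vertex `i` in the (unweighted) graph with adjacency matrix `A`. -/
def deg {n : ℕ} (A : Matrix (Fin n) (Fin n) ℝ) (i : Fin n) : ℝ := ∑ j, A i j

/-- The PageRank matrix `Q = αI + ((1−α)/2)·𝓛 = ((1+α)/2)·I − ((1−α)/2)·D^{-1/2} A D^{-1/2}`. -/
def Qmat {n : ℕ} (A : Matrix (Fin n) (Fin n) ℝ) (α : ℝ) : Matrix (Fin n) (Fin n) ℝ :=
  fun i j => (if i = j then (1 + α) / 2 else 0)
    - ((1 - α) / 2) * A i j / (Real.sqrt (deg A i) * Real.sqrt (deg A j))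

/-- Smooth PageRank objective `f(x) = (1/2)⟨x, Qx⟩ − α⟨D^{-1/2} e_v, x⟩` with seed vertex `v`. -/
def fPR {n : ℕ} (A : Matrix (Fin n) (Fin n) ℝ) (α : ℝ) (v : Fin n) (x : Fin n → ℝ) : ℝ :=
  (1 / 2) * (∑ i, x i * (Qmat A α).mulVec x i) - α * (x v / Real.sqrt (deg A v))

/-- Gradient of `fPR`: `∇f(x) = Qx − α·D^{-1/2} e_v`. -/
def gradf {n : ℕ} (A : Matrix (Fin n) (Fin n) ℝ) (α : ℝ) (v : Fin n) (x : Fin n → ℝ) :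
    Fin n → ℝ :=
  fun i => (Qmat A α).mulVec x i - α * (if i = v then 1 / Real.sqrt (deg A v) else 0)

/-- Weighted ℓ1 norm `‖D^{1/2} x‖₁ = ∑ i, √(d i)·|x i|`. -/
def l1w {n : ℕ} (A : Matrix (Fin n) (Fin n) ℝ) (x : Fin n → ℝ) : ℝ :=
  ∑ i, Real.sqrt (deg A i) * |x i|

/-- ℓ1-regularized PageRank objective `F_ρ(x) = f(x) + αρ‖D^{1/2}x‖₁`. -/
def Freg {n : ℕ} (A : Matrix (Fin n) (Fin n) ℝ) (α : ℝ) (v : Fin n) (ρ : ℝ)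
    (x : Fin n → ℝ) : ℝ :=
  fPR A α v x + α * ρ * l1w A x

/-- Coordinatewise soft-thresholding at levels `t·√(d i)`: this is the proximal map
`prox_{ηg}` of `g(x) = cαρ‖D^{1/2}x‖₁` with `t = η·c·α·ρ`. -/
def softT {n : ℕ} (A : Matrix (Fin n) (Fin n) ℝ) (t : ℝ) (w : Fin n → ℝ) : Fin n → ℝ :=
  fun i => Real.sign (w i) * max (|w i| - t * Real.sqrt (deg A i)) 0

/-- Euclidean norm on `Fin n → ℝ`. -/
def enorm2 {n : ℕ} (x : Fin n → ℝ) : ℝ := Real.sqrt (∑ i, (x i) ^ 2)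

open Classical in
/-- Degree-weighted volume of a vertex set: `vol(S) = ∑_{i ∈ S} d i`. -/
def volS {n : ℕ} (A : Matrix (Fin n) (Fin n) ℝ) (S : Set (Fin n)) : ℝ :=
  ∑ i ∈ Finset.univ.filter (fun i => i ∈ S), deg A i

/-- Neighbor set of a vertex. -/
def nbr {n : ℕ} (A : Matrix (Fin n) (Fin n) ℝ) (i : Fin n) : Set (Fin n) := {j | A i j ≠ 0}

/-- Vertex boundary of `S`: vertices outside `S` with a neighbor in `S`. -/
def bdry {n : ℕ} (A : Matrix (Fin n) (Fin n) ℝ) (S : Set (Fin n)) : Set (Fin n) :=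
  {j | j ∉ S ∧ ∃ i ∈ S, A j i ≠ 0}

/-- `A` is the adjacency matrix of a finite undirected unweighted loopless graph
with all degrees positive. -/
structure IsGraph {n : ℕ} (A : Matrix (Fin n) (Fin n) ℝ) : Prop where
  symm : ∀ i j, A i j = A j i
  zero_one : ∀ i j, A i j = 0 ∨ A i j = 1
  loopless : ∀ i, A i i = 0
  deg_pos : ∀ i, 0 < deg A i

/-- Single-step no-percolation: let `α ∈ (0,1)`, `S ⊇ S_B` (the seed lies in
`S_B ⊆ S`), with exposure condition `|N({i}) ∩ ∂S|/d_i ≤ (αρ/(2(1−α)))²·d_i·d_min∂S` for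
all exterior `i`. If `supp(y) ⊆ S ∪ ∂S` and `‖y‖₂ ≤ √20 + 1`, then for every exterior `i`
the forward-gradient map `u(y) = y − ∇f(y)` satisfies `|u(y)_i| ≤ 2αρ√d_i`, and hence
`prox_{g_B}(u(y))_i = 0`. -/
theorem exterior_coordinate_stays_zero
    {n : ℕ} (A : Matrix (Fin n) (Fin n) ℝ) (hG : IsGraph A)
    (α ρ : ℝ) (hα : 0 < α) (hα1 : α < 1) (hρ : 0 < ρ) (v : Fin n)
    (xB : Fin n → ℝ)
    (hxB : ∀ z, Freg A α v (2 * ρ) xB ≤ Freg A α v (2 * ρ) z)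
    (S : Set (Fin n))
    (hSB : Function.support xB ⊆ S)
    (hseed : xB v ≠ 0)
    (hexp : ∀ i : Fin n, i ∉ S ∪ bdry A S →
      ((nbr A i ∩ bdry A S).ncard : ℝ) / deg A i ≤
        (α * ρ / (2 * (1 - α))) ^ 2 * deg A i * sInf (deg A '' bdry A S))
    (yv : Fin n → ℝ)
    (hsupp : Function.support yv ⊆ S ∪ bdry A S)
    (hnorm : enorm2 yv ≤ Real.sqrt 20 + 1) :
    ∀ i : Fin n, i ∉ S ∪ bdry A S →
      |yv i - gradf A α v yv i| ≤ 2 * α * ρ * Real.sqrt (deg A i) ∧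
      softT A (2 * α * ρ) (fun j => yv j - gradf A α v yv j) i = 0 := by
  classical
  intro i hi
  have h1α : (0:ℝ) < 1 - α := by linarith
  have hvS : v ∈ S := hSB hseed
  have hiS : i ∉ S := fun h => hi (Or.inl h)
  have hib : i ∉ bdry A S := fun h => hi (Or.inr h)
  have hiv : i ≠ v := fun h => hiS (h ▸ hvS)
  have hyi : yv i = 0 := by
    by_contra h; exact hi (hsupp h)
  have hdi : 0 < deg A i := hG.deg_pos i
  have hsdi : 0 < Real.sqrt (deg A i) := Real.sqrt_pos.2 hdi
  set Y := enorm2 yv with hYdef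
  have hY0 : 0 ≤ Y := Real.sqrt_nonneg _
  have hY8 : Y ≤ 8 := by
    have h20 : Real.sqrt 20 ≤ 7 := by
      nlinarith [Real.sq_sqrt (show (0:ℝ) ≤ 20 by norm_num), Real.sqrt_nonneg 20]
    linarith
  have hu : yv i - gradf A α v yv i
      = ((1-α)/2) * ∑ j, A i j / (Real.sqrt (deg A i) * Real.sqrt (deg A j)) * yv j := by
    simp only [gradf, Qmat, Matrix.mulVec, dotProduct, if_neg hiv, mul_zero, sub_zero, hyi,
      zero_sub, sub_mul, Finset.sum_sub_distrib, ite_mul, zero_mul]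
    rw [Finset.sum_ite_eq, if_pos (Finset.mem_univ i), hyi, mul_zero, zero_sub, neg_neg,
      Finset.mul_sum]
    exact Finset.sum_congr rfl fun j _ => by ring
  set T : Finset (Fin n) := Finset.univ.filter (fun j => A i j ≠ 0 ∧ yv j ≠ 0) with hT
  have hrestrict : ∑ j, A i j / (Real.sqrt (deg A i) * Real.sqrt (deg A j)) * yv j
      = ∑ j ∈ T, A i j / (Real.sqrt (deg A i) * Real.sqrt (deg A j)) * yv j := by
    rw [hT]
    refine (Finset.sum_filter_of_ne fun j _ hne => ⟨fun h0 => hne ?_, fun h0 => hne ?_⟩).symm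
    · simp [h0]
    · simp [h0]
  have hTb : ∀ j ∈ T, j ∈ bdry A S := by
    intro j hj
    obtain ⟨-, hA, hy⟩ := Finset.mem_filter.1 hj
    rcases hsupp hy with hjS | hjb
    · exact absurd (show i ∈ bdry A S from ⟨hiS, j, hjS, hA⟩) hib
    · exact hjb
  have hbound : |yv i - gradf A α v yv i| ≤ 2 * α * ρ * Real.sqrt (deg A i) := by
    rcases T.eq_empty_or_nonempty with hTe | ⟨j0, hj0⟩
    · rw [hu, hrestrict, hTe, Finset.sum_empty, mul_zero, abs_zero]
      positivity
    · -- main case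
      set m := sInf (deg A '' bdry A S) with hmdef
      set c := α * ρ / (2 * (1 - α)) with hc
      have hc0 : 0 < c := div_pos (by positivity) (by linarith)
      have hBfin : (deg A '' bdry A S).Finite := (Set.toFinite (bdry A S)).image _
      have hBne : (deg A '' bdry A S).Nonempty := ⟨deg A j0, j0, hTb j0 hj0, rfl⟩
      have hm0 : 0 < m := by
        obtain ⟨j1, -, hj1⟩ := hBne.csInf_mem hBfin
        rw [hmdef, ← hj1]; exact hG.deg_pos j1
      have hsm : 0 < Real.sqrt m := Real.sqrt_pos.2 hm0
      have hmle : ∀ j ∈ bdry A S, m ≤ deg A j :=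
        fun j hj => csInf_le hBfin.bddBelow ⟨j, hj, rfl⟩
      have hterm : ∀ j ∈ T, |A i j / (Real.sqrt (deg A i) * Real.sqrt (deg A j)) * yv j|
          ≤ |yv j| / (Real.sqrt (deg A i) * Real.sqrt m) := by
        intro j hj
        obtain ⟨-, hA, -⟩ := Finset.mem_filter.1 hj
        have hAij : A i j = 1 := (hG.zero_one i j).resolve_left hA
        have hdj0 : 0 < Real.sqrt (deg A j) := Real.sqrt_pos.2 (hG.deg_pos j)
        have hmj : Real.sqrt m ≤ Real.sqrt (deg A j) := Real.sqrt_le_sqrt (hmle j (hTb j hj))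
        have heq : |A i j / (Real.sqrt (deg A i) * Real.sqrt (deg A j)) * yv j|
            = |yv j| / (Real.sqrt (deg A i) * Real.sqrt (deg A j)) := by
          rw [hAij, abs_mul, abs_of_pos (show (0:ℝ) < 1 / (Real.sqrt (deg A i) * Real.sqrt (deg A j)) by positivity), one_div_mul_eq_div]
        rw [heq]
        gcongr
      -- Cauchy-Schwarz
      have hYsq : Y ^ 2 = ∑ j, (yv j) ^ 2 := Real.sq_sqrt (by positivity)
      have hsum2 : ∑ j ∈ T, |yv j| ^ 2 ≤ Y ^ 2 := by
        rw [hYsq]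
        simp_rw [sq_abs]
        exact Finset.sum_le_sum_of_subset_of_nonneg (Finset.subset_univ T)
          fun j _ _ => sq_nonneg _
      have hCS : (∑ j ∈ T, |yv j|) ^ 2 ≤ (T.card : ℝ) * Y ^ 2 := by
        refine (sq_sum_le_card_mul_sum_sq).trans ?_
        exact mul_le_mul_of_nonneg_left hsum2 (Nat.cast_nonneg _)
      have hS1 : ∑ j ∈ T, |yv j| ≤ Real.sqrt (T.card) * Y := by
        have h := Real.sqrt_le_sqrt hCS
        rwa [Real.sqrt_sq (Finset.sum_nonneg fun j _ => abs_nonneg _),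
          Real.sqrt_mul (Nat.cast_nonneg _), Real.sqrt_sq hY0] at h
      -- cardinality bound
      have hsub : ↑T ⊆ nbr A i ∩ bdry A S := fun j hj =>
        ⟨(Finset.mem_filter.1 hj).2.1, hTb j hj⟩
      have hcard : (T.card : ℝ) ≤ ((nbr A i ∩ bdry A S).ncard : ℝ) := by
        exact_mod_cast Set.ncard_coe_finset T ▸ Set.ncard_le_ncard hsub (Set.toFinite _)
      have hexp' := hexp i hi
      rw [div_le_iff₀ hdi] at hexp'
      have hcard2 : (T.card : ℝ) ≤ (c * deg A i) ^ 2 * m := by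
        refine hcard.trans (hexp'.trans_eq ?_)
        rw [hc]; ring
      have hsqcard : Real.sqrt (T.card) ≤ c * deg A i * Real.sqrt m := by
        have h := Real.sqrt_le_sqrt hcard2
        rwa [Real.sqrt_mul (by positivity), Real.sqrt_sq (by positivity)] at h
      have hsdi' : Real.sqrt (deg A i) ≠ 0 := ne_of_gt hsdi
      have hsm' : Real.sqrt m ≠ 0 := ne_of_gt hsm
      calc |yv i - gradf A α v yv i|
          = ((1-α)/2) * |∑ j ∈ T, A i j / (Real.sqrt (deg A i) * Real.sqrt (deg A j)) * yv j| := by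
            rw [hu, hrestrict, abs_mul, abs_of_pos (by linarith : (0:ℝ) < (1-α)/2)]
        _ ≤ ((1-α)/2) * ∑ j ∈ T, |yv j| / (Real.sqrt (deg A i) * Real.sqrt m) := by
            refine mul_le_mul_of_nonneg_left ?_ (by linarith)
            exact (Finset.abs_sum_le_sum_abs _ _).trans (Finset.sum_le_sum hterm)
        _ = ((1-α)/2) * ((∑ j ∈ T, |yv j|) / (Real.sqrt (deg A i) * Real.sqrt m)) := by
            rw [Finset.sum_div]
        _ ≤ ((1-α)/2) * ((Real.sqrt (T.card) * Y) / (Real.sqrt (deg A i) * Real.sqrt m)) := by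
            gcongr
        _ ≤ ((1-α)/2) * ((c * deg A i * Real.sqrt m * Y)
              / (Real.sqrt (deg A i) * Real.sqrt m)) := by
            gcongr
        _ = (α * ρ / 4) * Real.sqrt (deg A i) * Y := by
            rw [hc]
            field_simp
            linear_combination (-4 * Y) * Real.mul_self_sqrt hdi.le
        _ ≤ (α * ρ / 4) * Real.sqrt (deg A i) * 8 := by
            refine mul_le_mul_of_nonneg_left hY8 (by positivity)
        _ = 2 * α * ρ * Real.sqrt (deg A i) := by ring
  refine ⟨hbound, ?_⟩
  have : max (|yv i - gradf A α v yv i| - 2 * α * ρ * Real.sqrt (deg A i)) 0 = 0 :=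
    max_eq_right (sub_nonpos.2 hbound)
  simp only [softT, this, mul_zero]
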